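/- arXiv:1603.00897 — 2 statements merged into one kernel-verified Lean document; each statement's English description precedes it below -/
import Mathlib

section
/- (Concentration of the norm.) Let X = (X₁, …, X_m) be a random vector in ℝᵐ with independent coordinates satisfying E[X_i²] = 1 and ‖X_i‖_{ψ₂} ≤ K for some K ≥ 1. Then there is an absolute constant C > 0 such that ‖ ‖X‖₂ − √m ‖_{ψ₂} ≤ C·K². -/
open MeasureTheory ProbabilityTheory

noncomputable section

/-- Euclidean (ℓ²) norm of a vector in ℝⁿ. -/
def l2norm {n : ℕ} (v : Fin n → ℝ) : ℝ := Real.sqrt (∑ i, (v i) ^ 2)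

/-- Matrix-vector product. -/
def matVec {m n : ℕ} (A : Fin m → Fin n → ℝ) (x : Fin n → ℝ) : Fin m → ℝ :=
  fun i => ∑ j, A i j * x j

/-- The sub-gaussian (ψ₂) norm of a real random variable:
`inf {K > 0 : E exp(Z²/K²) ≤ 2}`. -/
def psi2Norm {Ω : Type*} [MeasurableSpace Ω] (μ : Measure Ω) (Z : Ω → ℝ) : ℝ :=
  sInf {K : ℝ | 0 < K ∧ ∫ ω, Real.exp (Z ω ^ 2 / K ^ 2) ∂μ ≤ 2}

/-- The standard gaussian measure on ℝⁿ, i.e. the law of g ∼ N(0, Iₙ). -/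
def stdGaussian (n : ℕ) : Measure (Fin n → ℝ) :=
  Measure.pi fun _ => gaussianReal 0 1

/-- Gaussian complexity γ(T) = E sup_{x ∈ T} |⟨g, x⟩|. -/
def gaussianComplexity {n : ℕ} (T : Set (Fin n → ℝ)) : ℝ :=
  ∫ g, (⨆ x : T, |∑ j, g j * (x : Fin n → ℝ) j|) ∂stdGaussian n

/-- Gaussian width w(T) = E sup_{x ∈ T} ⟨g, x⟩. -/
def gaussianWidth {n : ℕ} (T : Set (Fin n → ℝ)) : ℝ :=
  ∫ g, (⨆ x : T, ∑ j, g j * (x : Fin n → ℝ) j) ∂stdGaussian n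

/-- Radius rad(T) = sup_{x ∈ T} ‖x‖₂. -/
def radius {n : ℕ} (T : Set (Fin n → ℝ)) : ℝ := ⨆ x : T, l2norm (x : Fin n → ℝ)

/-- An m × n random matrix `A` (with rows `A ω i`) is isotropic and sub-gaussian with
parameter `K`: its rows are independent random vectors, each row is isotropic
(`E Aᵢ Aᵢᵀ = Iₙ`), and each row has sub-gaussian norm at most `K`. -/
structure IsIsotropicSubGaussian {Ω : Type*} [MeasurableSpace Ω] (μ : Measure Ω)
    {m n : ℕ} (A : Ω → Fin m → Fin n → ℝ) (K : ℝ) : Prop where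
  measurable : Measurable A
  indep : iIndepFun (fun i ω => A ω i) μ
  isotropic : ∀ i j k, ∫ ω, A ω i j * A ω i k ∂μ = if j = k then 1 else 0
  subgaussian : ∀ i (θ : Fin n → ℝ), l2norm θ = 1 →
    psi2Norm μ (fun ω => ∑ j, A ω i j * θ j) ≤ K

section Aux

open Filter Set

lemma exp_half_le : Real.exp (1/2) ≤ 7/4 := by
  nlinarith [Real.exp_one_lt_d9, Real.exp_pos (1/2:ℝ), Real.exp_add (1/2:ℝ) (1/2),
    sq_nonneg (Real.exp (1/2) - 7/4)]

lemma sq_add_one_le (u : ℝ) (hu : 0 ≤ u) : (u+1)^2 ≤ 8 * Real.exp (u/2) := by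
  have h1 : (1 + u/6)^3 ≤ Real.exp (u/2) := by
    have h2 := Real.add_one_le_exp (u/6)
    calc (1+u/6)^3 ≤ (Real.exp (u/6))^3 := by
          apply pow_le_pow_left₀ (by positivity) (by linarith)
      _ = Real.exp ((3:ℕ) * (u/6)) := (Real.exp_nat_mul _ 3).symm
      _ = Real.exp (u/2) := by push_cast; ring_nf
  nlinarith [mul_nonneg hu (sq_nonneg (u - 9/2))]

lemma exp_quad_bound (x : ℝ) : Real.exp x ≤ 1 + x + x^2 * Real.exp |x| := by
  have hex : (1:ℝ) ≤ Real.exp |x| := Real.one_le_exp (abs_nonneg x)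
  rcases le_total (|x|) 1 with h | h
  · have hb := Real.exp_bound h (by norm_num : 0 < 2)
    have hb2 := (abs_le.1 hb).2
    simp [Finset.sum_range_succ] at hb2
    nlinarith [sq_nonneg x]
  · rcases le_total 0 x with hx | hx
    · have h1 : 1 ≤ x := by rwa [abs_of_nonneg hx] at h
      have h2 : Real.exp x ≤ x^2 * Real.exp |x| := by
        rw [abs_of_nonneg hx]
        nlinarith [mul_nonneg (by nlinarith : (0:ℝ) ≤ x^2 - 1) (Real.exp_pos x).le]
      linarith
    · have h1 : x ≤ -1 := by rw [abs_of_nonpos hx] at h; linarith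
      have he1 : Real.exp x ≤ 1 := Real.exp_le_one_iff.2 (by linarith)
      nlinarith

lemma mgf_one_var {Ω : Type} [MeasurableSpace Ω] (μ : Measure Ω) [IsProbabilityMeasure μ]
    (Y : Ω → ℝ) (L l : ℝ) (hmY : Measurable Y) (hL : 1 ≤ L)
    (hint : Integrable (fun ω => Real.exp (Y ω^2 / L^2)) μ)
    (hval : ∫ ω, Real.exp (Y ω^2 / L^2) ∂μ ≤ 2)
    (hm2 : Integrable (fun ω => Y ω^2) μ)
    (hmean : ∫ ω, Y ω^2 ∂μ = 1)
    (hl : |l| ≤ 1/2) :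
    ∫ ω, Real.exp (l * ((Y ω^2 - 1)/L^2)) ∂μ ≤ Real.exp (28 * l^2) := by
  have hL0 : (0:ℝ) < L := lt_of_lt_of_le one_pos hL
  have hL2 : (1:ℝ) ≤ L^2 := by nlinarith
  set W : Ω → ℝ := fun ω => (Y ω^2 - 1)/L^2 with hWdef
  have hWm : Measurable W := ((hmY.pow_const 2).sub_const 1).div_const _
  have hWint : Integrable W μ := (hm2.sub (integrable_const 1)).div_const _
  have hWmean : ∫ ω, W ω ∂μ = 0 := by
    simp only [hWdef]
    rw [integral_div, integral_sub hm2 (integrable_const 1), hmean]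
    simp
  have hpt : ∀ ω, Real.exp (l * W ω) ≤ 1 + l * W ω + 14 * l^2 * Real.exp (Y ω^2/L^2) := by
    intro ω
    set u : ℝ := Y ω^2 / L^2 with hu
    have hu0 : 0 ≤ u := by positivity
    have hWabs : |W ω| ≤ u + 1 := by
      have hYsq : (0:ℝ) ≤ Y ω^2 := sq_nonneg _
      have h1 : |Y ω^2 - 1| ≤ Y ω^2 + 1 := by
        rw [abs_sub_le_iff]; constructor <;> nlinarith
      have hWeq : |W ω| = |Y ω^2 - 1|/L^2 := by
        rw [hWdef, abs_div, abs_of_pos (by positivity : (0:ℝ) < L^2)]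
      rw [hWeq, div_le_iff₀ (by positivity : (0:ℝ) < L^2)]
      have : (u+1)*L^2 = Y ω^2 + L^2 := by rw [hu]; field_simp
      nlinarith
    have hq := exp_quad_bound (l * W ω)
    have habs : |l * W ω| ≤ (u+1)/2 := by
      rw [abs_mul]
      calc |l| * |W ω| ≤ (1/2) * (u+1) :=
          mul_le_mul hl hWabs (abs_nonneg _) (by norm_num)
        _ = (u+1)/2 := by ring
    have hexp : Real.exp |l * W ω| ≤ Real.exp (u/2) * (7/4) := by
      calc Real.exp |l*W ω| ≤ Real.exp ((u+1)/2) := Real.exp_le_exp.2 habs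
        _ = Real.exp (u/2) * Real.exp (1/2) := by rw [← Real.exp_add]; ring_nf
        _ ≤ Real.exp (u/2) * (7/4) := by nlinarith [exp_half_le, Real.exp_pos (u/2)]
    have hsq : (l * W ω)^2 ≤ l^2 * (8 * Real.exp (u/2)) := by
      rw [mul_pow]
      have hW2 : W ω^2 ≤ (u+1)^2 := by
        rw [← sq_abs (W ω)]
        apply pow_le_pow_left₀ (abs_nonneg _) hWabs
      nlinarith [sq_add_one_le u hu0, sq_nonneg l]
    have hmain : (l*W ω)^2 * Real.exp |l*W ω| ≤ 14 * l^2 * Real.exp u := by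
      calc (l*W ω)^2 * Real.exp |l*W ω| ≤ (l^2*(8*Real.exp (u/2))) * (Real.exp (u/2)*(7/4)) :=
          mul_le_mul hsq hexp (Real.exp_pos _).le (by positivity)
        _ = 14*l^2*(Real.exp (u/2)*Real.exp (u/2)) := by ring
        _ = 14*l^2*Real.exp u := by rw [← Real.exp_add]; ring_nf
    calc Real.exp (l*W ω) ≤ 1 + l*W ω + (l*W ω)^2*Real.exp |l*W ω| := hq
      _ ≤ 1 + l*W ω + 14*l^2*Real.exp u := by linarith
  have hDint : Integrable (fun ω => 1 + l*W ω + 14*l^2*Real.exp (Y ω^2/L^2)) μ :=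
    ((integrable_const 1).add (hWint.const_mul l)).add (hint.const_mul (14*l^2))
  have hEint : Integrable (fun ω => Real.exp (l * W ω)) μ := by
    refine hDint.mono' ((hWm.const_mul l).exp.aestronglyMeasurable) (ae_of_all _ fun ω => ?_)
    rw [Real.norm_eq_abs, abs_of_pos (Real.exp_pos _)]
    exact hpt ω
  calc ∫ ω, Real.exp (l*W ω) ∂μ ≤ ∫ ω, (1 + l*W ω + 14*l^2*Real.exp (Y ω^2/L^2)) ∂μ :=
      integral_mono hEint hDint hpt
    _ = 1 + l * ∫ ω, W ω ∂μ + 14*l^2 * ∫ ω, Real.exp (Y ω^2/L^2) ∂μ := by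
      have i3 : Integrable (fun ω => l * W ω) μ := hWint.const_mul l
      have i4 : Integrable (fun ω => 14*l^2 * Real.exp (Y ω^2/L^2)) μ := hint.const_mul _
      have i12 : Integrable (fun ω => 1 + l * W ω) μ := (integrable_const 1).add i3
      rw [integral_add i12 i4, integral_add (integrable_const 1) i3,
          integral_const, integral_const_mul, integral_const_mul]
      simp [measure_univ]
    _ ≤ 1 + 28 * l^2 := by rw [hWmean]; nlinarith [sq_nonneg l]
    _ ≤ Real.exp (28 * l^2) := by nlinarith [Real.add_one_le_exp (28*l^2)]

lemma dev_lemma (x b u : ℝ) (hx : 0 ≤ x) (hb : 0 ≤ b) (h : u ≤ |x - b|) :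
    u * max u b ≤ |x^2 - b^2| := by
  rcases le_total u 0 with hu | hu
  · have hmax : max u b = b := max_eq_right (hu.trans hb)
    rw [hmax]
    exact (mul_nonpos_of_nonpos_of_nonneg hu hb).trans (abs_nonneg _)
  · rcases le_total b x with hxb | hxb
    · have h1 : u ≤ x - b := by rwa [abs_of_nonneg (by linarith)] at h
      rcases max_cases u b with ⟨he, _⟩ | ⟨he, _⟩ <;> rw [he] <;>
        · refine le_trans ?_ (le_abs_self _)
          nlinarith
    · have h1 : u ≤ b - x := by
        rw [abs_of_nonpos (by linarith : x - b ≤ 0)] at h; linarith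
      have hub : u ≤ b := by linarith
      rw [max_eq_right hub, abs_sub_comm]
      refine le_trans ?_ (le_abs_self _)
      nlinarith

lemma improper_int : IntegrableOn (fun s : ℝ => 2*((1+s)^4)⁻¹) (Set.Ioi 0)
    ∧ ∫ s in Set.Ioi (0:ℝ), 2*((1+s)^4)⁻¹ = 2/3 := by
  have hderiv : ∀ s ∈ Set.Ici (0:ℝ),
      HasDerivAt (fun s : ℝ => -(2/3)*((1+s)^3)⁻¹) (2*((1+s)^4)⁻¹) s := by
    intro s hs
    have hs0 : (0:ℝ) ≤ s := hs
    have hne : ((1+s)^3 : ℝ) ≠ 0 := by positivity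
    have h1 : HasDerivAt (fun s : ℝ => 1+s) 1 s := (hasDerivAt_id s).const_add 1
    have h2 : HasDerivAt (fun s : ℝ => (1+s)^3) (3*(1+s)^2*1) s := h1.pow 3
    have h3 : HasDerivAt (fun s : ℝ => -(2/3)*((1+s)^3)⁻¹)
        (-(2/3) * (-(3*(1+s)^2*1) / ((1+s)^3)^2)) s := (h2.inv hne).const_mul (-(2/3) : ℝ)
    convert h3 using 1
    have h1s : (1+s : ℝ) ≠ 0 := by positivity
    field_simp
  have hpos : ∀ s ∈ Set.Ioi (0:ℝ), 0 ≤ 2*((1+s)^4)⁻¹ := by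
    intro s hs
    have : (0:ℝ) < s := hs
    positivity
  have htend : Tendsto (fun s : ℝ => -(2/3)*((1+s)^3)⁻¹) atTop (nhds 0) := by
    have h1 : Tendsto (fun s : ℝ => (1+s)^3) atTop atTop :=
      (tendsto_pow_atTop (by norm_num : (3:ℕ) ≠ 0)).comp
        (tendsto_atTop_add_const_left _ 1 tendsto_id)
    have h3 := h1.inv_tendsto_atTop.const_mul (-(2/3) : ℝ)
    simpa using h3
  constructor
  · exact integrableOn_Ioi_deriv_of_nonneg' hderiv hpos htend
  · rw [integral_Ioi_of_hasDerivAt_of_nonneg' hderiv hpos htend]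
    norm_num

end Aux

set_option maxHeartbeats 2000000 in
/-- **Concentration of the norm** of a vector with independent sub-gaussian
coordinates of unit second moment. -/
theorem concentration_of_norm :
    ∃ C : ℝ, 0 < C ∧
    ∀ (Ω : Type) [MeasurableSpace Ω] (μ : Measure Ω), IsProbabilityMeasure μ →
      ∀ (m : ℕ) (X : Ω → Fin m → ℝ) (K : ℝ), 1 ≤ K →
        Measurable X →
        iIndepFun (fun i ω => X ω i) μ →
        (∀ i, ∫ ω, X ω i ^ 2 ∂μ = 1) →
        (∀ i, psi2Norm μ (fun ω => X ω i) ≤ K) →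
        psi2Norm μ (fun ω => l2norm (X ω) - Real.sqrt m) ≤ C * K ^ 2 := by
  classical
  refine ⟨100, by norm_num, ?_⟩
  intro Ω mΩ μ hμ m X K hK hmX hind hmom hpsi
  haveI := hμ
  have hK0 : (0:ℝ) < K := lt_of_lt_of_le one_pos hK
  have hK2pos : (0:ℝ) < 100*K^2 := by positivity
  set Z : Ω → ℝ := fun ω => l2norm (X ω) - Real.sqrt (m : ℝ) with hZdef
  have hbdd : BddBelow {t : ℝ | 0 < t ∧ ∫ ω, Real.exp (Z ω ^ 2 / t ^ 2) ∂μ ≤ 2} :=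
    ⟨0, fun t ht => ht.1.le⟩
  have hmem : ∀ t : ℝ, 0 < t → (∫ ω, Real.exp (Z ω ^ 2 / t ^ 2) ∂μ ≤ 2) →
      psi2Norm μ Z ≤ t := fun t ht h2 => csInf_le hbdd ⟨ht, h2⟩
  have hgoal : psi2Norm μ Z ≤ 100 * K ^ 2 → psi2Norm μ Z ≤ 100 * K ^ 2 := id
  -- dispose of m = 0
  rcases Nat.eq_zero_or_pos m with hm0 | hmpos
  · subst hm0
    refine hmem (100*K^2) hK2pos ?_
    have hZ0 : ∀ ω, Z ω = 0 := by
      intro ω; simp [hZdef, l2norm]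
    calc ∫ ω, Real.exp (Z ω ^ 2 / (100*K^2) ^ 2) ∂μ = ∫ _ω, (1:ℝ) ∂μ := by
          refine integral_congr_ae (ae_of_all _ fun ω => ?_)
          simp only [hZ0 ω]; norm_num
      _ = 1 := by simp [measure_univ]
      _ ≤ 2 := by norm_num
  by_cases hA : ∃ t : ℝ, 0 < t ∧ t ≤ 100*K^2 ∧ ∫ ω, Real.exp (Z ω ^ 2 / t ^ 2) ∂μ ≤ 2
  · obtain ⟨t, ht0, htle, hte⟩ := hA
    exact (hmem t ht0 hte).trans htle
  push_neg at hA
  exfalso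
  set M : ℝ := (m : ℝ) with hMdef
  have hM1 : (1:ℝ) ≤ M := by
    rw [hMdef]; exact_mod_cast hmpos
  have hM0 : (0:ℝ) < M := by linarith
  set L : ℝ := 2*K with hLdef
  have hL1 : (1:ℝ) ≤ L := by rw [hLdef]; linarith
  have hL0 : (0:ℝ) < L := by linarith
  have hdivle : ∀ (x y c : ℝ), 0 < c → x ≤ y → x / c ≤ y / c := by
    intro x y c hc h; gcongr
  have hdivden : ∀ (x c d : ℝ), 0 ≤ x → 0 < c → c ≤ d → x/d ≤ x/c := by
    intro x c d hx hc hcd; gcongr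
  -- measurability
  have hYm : ∀ i, Measurable fun ω => X ω i := fun i => (measurable_pi_apply i).comp hmX
  have hsm : Measurable fun ω => ∑ i, (X ω i)^2 :=
    Finset.measurable_sum _ (fun i _ => (hYm i).pow_const 2)
  have hZm : Measurable Z := by
    have hzz : Z = fun ω => Real.sqrt (∑ i, (X ω i)^2) - Real.sqrt M := rfl
    rw [hzz]
    exact (Real.continuous_sqrt.measurable.comp hsm).sub_const _
  -- algebra
  have hl2eq : ∀ ω, (∑ i, (X ω i)^2) = (Z ω + Real.sqrt M)^2 := by
    intro ω
    have h0 : (0:ℝ) ≤ ∑ i, (X ω i)^2 := Finset.sum_nonneg fun i _ => sq_nonneg _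
    have h1 : Z ω + Real.sqrt M = l2norm (X ω) := by simp only [hZdef]; ring
    rw [h1]
    exact (Real.sq_sqrt h0).symm
  have hsum_le : ∀ ω, (∑ i, (X ω i)^2) ≤ 2*Z ω^2 + 2*M := by
    intro ω
    rw [hl2eq ω]
    have hs : Real.sqrt M ^ 2 = M := Real.sq_sqrt hM0.le
    nlinarith [sq_nonneg (Z ω - Real.sqrt M)]
  have hXile : ∀ (i : Fin m) ω, (X ω i)^2 ≤ 2*Z ω^2 + 2*M := by
    intro i ω
    refine le_trans ?_ (hsum_le ω)
    exact Finset.single_le_sum (fun j _ => sq_nonneg (X ω j)) (Finset.mem_univ i)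
  -- integrability of exp(c Z²)
  have hZc : ∀ c : ℝ, 0 < c → Integrable (fun ω => Real.exp (c * Z ω ^ 2)) μ := by
    intro c hc
    set t : ℝ := min (Real.sqrt c)⁻¹ (100*K^2) with htdef
    have ht0 : 0 < t := lt_min (by positivity) hK2pos
    have hti : Integrable (fun ω => Real.exp (Z ω ^ 2 / t ^ 2)) μ := by
      by_contra hcon
      have h0 := integral_undef hcon
      have h2 := hA t ht0 (min_le_right _ _)
      rw [h0] at h2; norm_num at h2
    refine hti.mono' (((hZm.pow_const 2).const_mul c).exp.aestronglyMeasurable)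
      (ae_of_all _ fun ω => ?_)
    rw [Real.norm_eq_abs, abs_of_pos (Real.exp_pos _)]
    apply Real.exp_le_exp.2
    have h1 : t ≤ (Real.sqrt c)⁻¹ := min_le_left _ _
    have h3 : ((Real.sqrt c)⁻¹)^2 = c⁻¹ := by rw [inv_pow, Real.sq_sqrt hc.le]
    have h4 : t^2 ≤ c⁻¹ := h3 ▸ pow_le_pow_left₀ ht0.le h1 2
    have h2 : c * t^2 ≤ 1 := by
      calc c * t^2 ≤ c * c⁻¹ := by nlinarith
        _ = 1 := mul_inv_cancel₀ hc.ne'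
    have h5 : c ≤ (t^2)⁻¹ := by
      rw [← one_div, le_div_iff₀ (by positivity)]; linarith
    rw [div_eq_mul_inv]
    calc c * Z ω^2 ≤ (t^2)⁻¹ * Z ω^2 := mul_le_mul_of_nonneg_right h5 (sq_nonneg _)
      _ = Z ω^2 * (t^2)⁻¹ := mul_comm _ _
  -- integrability of exp(X_i²/s²)
  have hXc : ∀ (i : Fin m) (s : ℝ), 0 < s →
      Integrable (fun ω => Real.exp ((X ω i)^2 / s^2)) μ := by
    intro i s hs
    have hdom := (hZc (2/s^2) (by positivity)).const_mul (Real.exp (2*M/s^2))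
    refine hdom.mono' ((((hYm i).pow_const 2).div_const _).exp.aestronglyMeasurable)
      (ae_of_all _ fun ω => ?_)
    rw [Real.norm_eq_abs, abs_of_pos (Real.exp_pos _), ← Real.exp_add]
    apply Real.exp_le_exp.2
    calc (X ω i)^2/s^2 ≤ (2*Z ω^2 + 2*M)/s^2 := hdivle _ _ _ (by positivity) (hXile i ω)
      _ = 2*M/s^2 + 2/s^2 * Z ω^2 := by ring
  -- integrability of X_i²
  have hX2int : ∀ i, Integrable (fun ω => (X ω i)^2) μ := by
    intro i
    refine (hXc i 1 one_pos).mono' (((hYm i).pow_const 2).aestronglyMeasurable)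
      (ae_of_all _ fun ω => ?_)
    rw [Real.norm_eq_abs, abs_of_nonneg (sq_nonneg _)]
    have h2 : (X ω i)^2/1^2 = (X ω i)^2 := by norm_num
    rw [h2]
    linarith [Real.add_one_le_exp ((X ω i)^2)]
  -- E exp(X_i²/L²) ≤ 2
  have hexpL : ∀ i, ∫ ω, Real.exp ((X ω i)^2 / L^2) ∂μ ≤ 2 := by
    intro i
    have htendsto : Filter.Tendsto (fun s : ℝ => ∫ ω, Real.exp ((X ω i)^2 / s^2) ∂μ)
        Filter.atTop (nhds 1) := by
      have h1 : Filter.Tendsto (fun s : ℝ => ∫ ω, Real.exp ((X ω i)^2 / s^2) ∂μ)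
          Filter.atTop (nhds (∫ _ω, (1:ℝ) ∂μ)) := by
        refine tendsto_integral_filter_of_dominated_convergence
          (fun ω => Real.exp ((X ω i)^2/1^2)) ?_ ?_ (hXc i 1 one_pos) ?_
        · filter_upwards with s
          exact ((((hYm i).pow_const 2).div_const _).exp.aestronglyMeasurable)
        · filter_upwards [Filter.eventually_ge_atTop (1:ℝ)] with s hs
          refine ae_of_all _ fun ω => ?_
          rw [Real.norm_eq_abs, abs_of_pos (Real.exp_pos _)]
          apply Real.exp_le_exp.2
          exact hdivden _ _ _ (sq_nonneg _) (by norm_num) (by nlinarith)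
        · refine ae_of_all _ fun ω => ?_
          have hdiv : Filter.Tendsto (fun s : ℝ => (X ω i)^2 / s^2) Filter.atTop (nhds 0) :=
            Filter.Tendsto.div_atTop tendsto_const_nhds
              (Filter.tendsto_pow_atTop (by norm_num : (2:ℕ) ≠ 0))
          have h2 := (Real.continuous_exp.tendsto 0).comp hdiv
          simpa [Function.comp_def] using h2
      simpa [measure_univ] using h1
    have hlt := htendsto.eventually_lt_const (by norm_num : (1:ℝ) < 2)
    obtain ⟨s₁, hv, hs₁⟩ := (hlt.and (Filter.eventually_gt_atTop 0)).exists
    have hSne : Set.Nonempty {s : ℝ | 0 < s ∧ ∫ ω, Real.exp ((X ω i)^2 / s^2) ∂μ ≤ 2} :=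
      ⟨s₁, hs₁, hv.le⟩
    have hbddi : BddBelow {s : ℝ | 0 < s ∧ ∫ ω, Real.exp ((X ω i)^2 / s^2) ∂μ ≤ 2} :=
      ⟨0, fun t ht => ht.1.le⟩
    have hpsii : sInf {s : ℝ | 0 < s ∧ ∫ ω, Real.exp ((X ω i)^2 / s^2) ∂μ ≤ 2} ≤ K := hpsi i
    obtain ⟨s, ⟨hs0, hsval⟩, hslt⟩ := (csInf_lt_iff hbddi hSne).1
      (lt_of_le_of_lt hpsii (by rw [hLdef]; linarith : K < L))
    refine le_trans ?_ hsval
    refine integral_mono (hXc i L hL0) (hXc i s hs0) fun ω => ?_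
    apply Real.exp_le_exp.2
    exact hdivden _ _ _ (sq_nonneg _) (by positivity) (by nlinarith [hslt, hs0])
  -- per-coordinate mgf
  set Wf : Fin m → Ω → ℝ := fun i ω => ((X ω i)^2 - 1)/L^2 with hWf
  have hWmgf : ∀ (i : Fin m) (l : ℝ), |l| ≤ 1/2 →
      ∫ ω, Real.exp (l * Wf i ω) ∂μ ≤ Real.exp (28*l^2) := by
    intro i l hl
    exact mgf_one_var μ (fun ω => X ω i) L l (hYm i) hL1 (hXc i L hL0) (hexpL i)
      (hX2int i) (hmom i) hl
  set T : Ω → ℝ := fun ω => ((∑ i, (X ω i)^2) - M)/L^2 with hTdef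
  have hTm : Measurable T := (hsm.sub_const M).div_const _
  have hTsum : T = ∑ i, Wf i := by
    funext ω
    rw [Finset.sum_apply]
    simp only [hTdef, hWf]
    rw [eq_comm, ← Finset.sum_div]
    congr 2
    rw [Finset.sum_sub_distrib, Finset.sum_const, Finset.card_univ, Fintype.card_fin]
    simp [hMdef]
  have hWm' : ∀ i, Measurable (Wf i) :=
    fun i => (((hYm i).pow_const 2).sub_const 1).div_const _
  have hindW : iIndepFun Wf μ := by
    have h := hind.comp (fun _ => fun x : ℝ => (x^2 - 1)/L^2)
      (fun _ => ((measurable_id.pow_const 2).sub_const 1).div_const _)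
    exact h
  have hmgfT : ∀ l : ℝ, |l| ≤ 1/2 → mgf T μ l ≤ Real.exp (28*l^2*M) := by
    intro l hl
    rw [hTsum, iIndepFun.mgf_sum hindW hWm' Finset.univ]
    calc ∏ i, mgf (Wf i) μ l ≤ ∏ _i : Fin m, Real.exp (28*l^2) :=
        Finset.prod_le_prod (fun i _ => mgf_nonneg) (fun i _ => hWmgf i l hl)
      _ = Real.exp (28*l^2) ^ m := by
        rw [Finset.prod_const, Finset.card_univ, Fintype.card_fin]
      _ = Real.exp (28*l^2*M) := by
        rw [← Real.exp_nat_mul]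
        congr 1
        rw [hMdef]; ring
  -- integrability for Chernoff
  have hsum0 : ∀ ω, (0:ℝ) ≤ ∑ i, (X ω i)^2 :=
    fun ω => Finset.sum_nonneg fun i _ => sq_nonneg _
  have hTub : ∀ ω, T ω ≤ (2*Z ω^2 + M)/L^2 := by
    intro ω
    simp only [hTdef]
    exact hdivle _ _ _ (by positivity) (by linarith [hsum_le ω])
  have hTnegub : ∀ ω, -T ω ≤ M/L^2 := by
    intro ω
    have h1 : -T ω = (M - ∑ i, (X ω i)^2)/L^2 := by simp only [hTdef]; ring
    rw [h1]
    exact hdivle _ _ _ (by positivity) (by linarith [hsum0 ω])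
  have hintT : ∀ l : ℝ, 0 < l → l ≤ 1/2 → Integrable (fun ω => Real.exp (l * T ω)) μ := by
    intro l h0 _hhalf
    have hdom := (hZc (2*l/L^2) (by positivity)).const_mul (Real.exp (l*M/L^2))
    refine hdom.mono' ((hTm.const_mul l).exp.aestronglyMeasurable) (ae_of_all _ fun ω => ?_)
    rw [Real.norm_eq_abs, abs_of_pos (Real.exp_pos _), ← Real.exp_add]
    apply Real.exp_le_exp.2
    have h1 := hTub ω
    have h2 : l * T ω ≤ l * ((2*Z ω^2 + M)/L^2) := mul_le_mul_of_nonneg_left h1 h0.le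
    have h3 : l * ((2*Z ω^2 + M)/L^2) = l*M/L^2 + 2*l/L^2 * Z ω^2 := by
      field_simp; ring
    linarith
  have hintTneg : ∀ l : ℝ, 0 < l → Integrable (fun ω => Real.exp (l * (-T) ω)) μ := by
    intro l h0
    refine (integrable_const (Real.exp (l*(M/L^2)))).mono'
      ((hTm.neg.const_mul l).exp.aestronglyMeasurable) (ae_of_all _ fun ω => ?_)
    rw [Real.norm_eq_abs, abs_of_pos (Real.exp_pos _)]
    apply Real.exp_le_exp.2
    have h1 := hTnegub ω
    simp only [Pi.neg_apply]
    nlinarith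
  -- the tail bound
  have htail : ∀ u : ℝ, 0 < u →
      (μ {ω | u ≤ |Z ω|}).toReal ≤ 2*Real.exp (-(u^2/(112*L^4))) := by
    intro u hu
    have hsqrtM : (0:ℝ) < Real.sqrt M := Real.sqrt_pos.2 hM0
    set a : ℝ := u * max u (Real.sqrt M) / L^2 with hadef
    have hmaxpos : 0 < max u (Real.sqrt M) := lt_of_lt_of_le hsqrtM (le_max_right _ _)
    have ha0 : 0 < a := div_pos (mul_pos hu hmaxpos) (by positivity)
    have haL : a * L^2 = u * max u (Real.sqrt M) := by
      rw [hadef]; field_simp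
    have hamax1 : u * u ≤ a * L^2 := by
      rw [haL]
      exact mul_le_mul_of_nonneg_left (le_max_left _ _) hu.le
    have hamax2 : u * Real.sqrt M ≤ a * L^2 := by
      rw [haL]
      exact mul_le_mul_of_nonneg_left (le_max_right _ _) hu.le
    have hL4 : (0:ℝ) < L^4 := by positivity
    have hL2 : (1:ℝ) ≤ L^2 := by nlinarith
    -- chernoff for both tails
    have hcher : ∀ l : ℝ, 0 < l → l ≤ 1/2 →
        (μ {ω | a ≤ T ω}).toReal + (μ {ω | a ≤ (-T) ω}).toReal
          ≤ 2*Real.exp (28*l^2*M - l*a) := by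
      intro l hl0 hlhalf
      have hlabs : |l| ≤ 1/2 := by rw [abs_of_pos hl0]; exact hlhalf
      have he : Real.exp (-l*a) * Real.exp (28*l^2*M) = Real.exp (28*l^2*M - l*a) := by
        rw [← Real.exp_add]; ring_nf
      have hp := (Real.exp_pos (-l*a)).le
      have hP1 : (μ {ω | a ≤ T ω}).toReal ≤ Real.exp (28*l^2*M - l*a) := by
        refine (measure_ge_le_exp_mul_mgf (μ := μ) (X := T) a hl0.le
          (hintT l hl0 hlhalf)).trans ?_
        rw [← he]
        exact mul_le_mul_of_nonneg_left (hmgfT l hlabs) hp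
      have hP2 : (μ {ω | a ≤ (-T) ω}).toReal ≤ Real.exp (28*l^2*M - l*a) := by
        refine (measure_ge_le_exp_mul_mgf (μ := μ) (X := -T) a hl0.le
          (hintTneg l hl0)).trans ?_
        rw [← he]
        refine mul_le_mul_of_nonneg_left ?_ hp
        rw [mgf_neg]
        have h2 := hmgfT (-l) (by rwa [abs_neg])
        simpa [neg_sq] using h2
      linarith
    -- choice of l
    obtain ⟨l, hl0, hlhalf, hkey⟩ : ∃ l : ℝ, 0 < l ∧ l ≤ 1/2 ∧
        28*l^2*M - l*a ≤ -(u^2/(112*L^4)) := by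
      have ha2 : u^2*M ≤ a^2 * L^4 := by
        have h2 := mul_self_le_mul_self (by positivity : (0:ℝ) ≤ u*Real.sqrt M) hamax2
        nlinarith [Real.sq_sqrt hM0.le]
      have hau : u^2 ≤ a * L^2 := by nlinarith
      rcases le_total (a/(56*M)) (1/2) with hc | hc
      · refine ⟨a/(56*M), by positivity, hc, ?_⟩
        have heq : 28*(a/(56*M))^2*M - (a/(56*M))*a = -(a^2/(112*M)) := by
          field_simp; ring
        rw [heq, neg_le_neg_iff]
        rw [div_le_div_iff₀ (by positivity) (by positivity)]
        nlinarith
      · refine ⟨1/2, one_half_pos, le_rfl, ?_⟩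
        rw [le_div_iff₀ (by positivity)] at hc
        have h28 : 28*M ≤ a := by linarith
        have hu112 : u^2/(112*L^4) ≤ a/112 := by
          rw [div_le_div_iff₀ (by positivity) (by norm_num)]
          nlinarith
        nlinarith
    -- inclusion of events
    have hincl : {ω | u ≤ |Z ω|} ⊆ {ω | a ≤ T ω} ∪ {ω | a ≤ (-T) ω} := by
      intro ω hω
      have hω' : u ≤ |Z ω| := hω
      have h0 := hsum0 ω
      have hx2 : l2norm (X ω)^2 = ∑ i, (X ω i)^2 := Real.sq_sqrt h0
      have hZω : Z ω = l2norm (X ω) - Real.sqrt M := rfl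
      have hdev := dev_lemma (l2norm (X ω)) (Real.sqrt M) u (Real.sqrt_nonneg _)
        (Real.sqrt_nonneg _) (by rw [hZω] at hω'; exact hω')
      rw [hx2, Real.sq_sqrt hM0.le] at hdev
      have habs : a ≤ |T ω| := by
        have hTeq : |T ω| = |(∑ i, (X ω i)^2) - M|/L^2 := by
          simp only [hTdef]
          rw [abs_div, abs_of_pos (by positivity : (0:ℝ) < L^2)]
        rw [hTeq, hadef]
        exact hdivle _ _ _ (by positivity) hdev
      rcases abs_cases (T ω) with ⟨he, _⟩ | ⟨he, _⟩
      · exact Or.inl (by rw [he] at habs; exact habs)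
      · refine Or.inr ?_
        show a ≤ (-T) ω
        rw [Pi.neg_apply]
        rw [he] at habs
        exact habs
    calc (μ {ω | u ≤ |Z ω|}).toReal
        ≤ (μ ({ω | a ≤ T ω} ∪ {ω | a ≤ (-T) ω})).toReal :=
          ENNReal.toReal_mono (measure_ne_top μ _) (measure_mono hincl)
      _ ≤ (μ {ω | a ≤ T ω}).toReal + (μ {ω | a ≤ (-T) ω}).toReal := by
          rw [← ENNReal.toReal_add (measure_ne_top μ _) (measure_ne_top μ _)]
          exact ENNReal.toReal_mono
            (ENNReal.add_ne_top.2 ⟨measure_ne_top μ _, measure_ne_top μ _⟩)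
            (measure_union_le _ _)
      _ ≤ 2*Real.exp (28*l^2*M - l*a) := hcher l hl0 hlhalf
      _ ≤ 2*Real.exp (-(u^2/(112*L^4))) := by
          have h := Real.exp_le_exp.2 hkey; linarith
  -- layer cake
  set t₀ : ℝ := 100*K^2 with ht₀
  have hint₀ : Integrable (fun ω => Real.exp (Z ω^2/t₀^2)) μ := by
    by_contra hcon
    have h0 := integral_undef hcon
    have h2 := hA t₀ hK2pos le_rfl
    rw [h0] at h2; norm_num at h2
  set f : Ω → ℝ := fun ω => Real.exp (Z ω^2/t₀^2) - 1 with hfdef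
  have hfint : Integrable f μ := hint₀.sub (integrable_const 1)
  have hfnn : 0 ≤ᵐ[μ] f := ae_of_all _ fun ω => by
    have : (1:ℝ) ≤ Real.exp (Z ω^2/t₀^2) := Real.one_le_exp (by positivity)
    simp only [hfdef, Pi.zero_apply]
    linarith
  have hlayer := hfint.integral_eq_integral_meas_lt hfnn
  have hptw : ∀ s ∈ Set.Ioi (0:ℝ), (μ {ω | s < f ω}).toReal ≤ 2*((1+s)^4)⁻¹ := by
    intro s hs
    have hs0 : (0:ℝ) < s := hs
    have hlog : 0 < Real.log (1+s) := Real.log_pos (by linarith)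
    set u : ℝ := t₀ * Real.sqrt (Real.log (1+s)) with hudef
    have hu0 : 0 < u := mul_pos hK2pos (Real.sqrt_pos.2 hlog)
    have hu2 : u^2 = t₀^2 * Real.log (1+s) := by
      rw [hudef, mul_pow, Real.sq_sqrt hlog.le]
    have hsub : {ω | s < f ω} ⊆ {ω | u ≤ |Z ω|} := by
      intro ω hω
      have hω' : s < f ω := hω
      have h1 : Real.log (1+s) < Z ω^2/t₀^2 := by
        rw [Real.log_lt_iff_lt_exp (by linarith)]
        simp only [hfdef] at hω'
        linarith
      rw [lt_div_iff₀ (by positivity : (0:ℝ) < t₀^2)] at h1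
      have h2 : u^2 ≤ Z ω^2 := by rw [hu2]; nlinarith
      show u ≤ |Z ω|
      calc u = |u| := (abs_of_pos hu0).symm
        _ ≤ |Z ω| := by
          rw [← Real.sqrt_sq_eq_abs, ← Real.sqrt_sq_eq_abs]
          exact Real.sqrt_le_sqrt h2
    have hmono : (μ {ω | s < f ω}).toReal ≤ (μ {ω | u ≤ |Z ω|}).toReal :=
      ENNReal.toReal_mono (measure_ne_top μ _) (measure_mono hsub)
    have htt := htail u hu0
    have hratio : 4*Real.log (1+s) ≤ u^2/(112*L^4) := by
      rw [hu2, le_div_iff₀ (by positivity)]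
      rw [ht₀, hLdef]
      nlinarith [mul_nonneg (le_of_lt (pow_pos hK0 4)) hlog.le, pow_pos hK0 4]
    have hexp4 : Real.exp (-(4*Real.log (1+s))) = ((1+s)^4)⁻¹ := by
      rw [Real.exp_neg]
      congr 1
      rw [show (4:ℝ)*Real.log (1+s) = ((4:ℕ):ℝ)*Real.log (1+s) by norm_num,
        Real.exp_nat_mul, Real.exp_log (by linarith)]
    have hfin : Real.exp (-(u^2/(112*L^4))) ≤ ((1+s)^4)⁻¹ := by
      rw [← hexp4]
      exact Real.exp_le_exp.2 (by linarith)
    linarith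
  have htm : Measurable fun s : ℝ => (μ {ω | s < f ω}).toReal := by
    apply Measurable.ennreal_toReal
    apply Antitone.measurable
    intro s1 s2 h12
    exact measure_mono fun ω hω => lt_of_le_of_lt h12 hω
  have htint : IntegrableOn (fun s : ℝ => (μ {ω | s < f ω}).toReal) (Set.Ioi 0) := by
    refine improper_int.1.mono' htm.aestronglyMeasurable ?_
    rw [ae_restrict_iff' measurableSet_Ioi]
    refine ae_of_all _ fun s hs => ?_
    rw [Real.norm_eq_abs, abs_of_nonneg ENNReal.toReal_nonneg]
    exact hptw s hs
  have hbound : ∫ ω, f ω ∂μ ≤ 2/3 := by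
    rw [hlayer]
    calc ∫ s in Set.Ioi (0:ℝ), (μ {ω | s < f ω}).toReal
        ≤ ∫ s in Set.Ioi (0:ℝ), 2*((1+s)^4)⁻¹ :=
          setIntegral_mono_on htint improper_int.1 measurableSet_Ioi hptw
      _ = 2/3 := improper_int.2
  have hval : ∫ ω, Real.exp (Z ω^2/t₀^2) ∂μ ≤ 2 := by
    have heq : ∫ ω, Real.exp (Z ω^2/t₀^2) ∂μ = (∫ ω, f ω ∂μ) + 1 := by
      have hfe : (fun ω => Real.exp (Z ω^2/t₀^2)) = fun ω => f ω + 1 := by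
        funext ω; simp [hfdef]
      rw [hfe, integral_add hfint (integrable_const 1), integral_const]
      simp [measure_univ]
    rw [heq]; linarith
  exact absurd hval (not_le.2 (hA t₀ hK2pos le_rfl))

end
end

section
/- (Concentration of a random matrix on a single vector.) Let A be an m×n isotropic, sub-gaussian random matrix with parameter K ≥ 1. Then there is an absolute constant C > 0 such that for every unit vector x ∈ S^{n−1}, one has ‖ ‖Ax‖₂ − √m ‖_{ψ₂} ≤ C·K². -/
open MeasureTheory ProbabilityTheory Filter Topology Set

noncomputable section

lemma aux_exp_quad {x : ℝ} (hx : 0 ≤ x) : Real.exp x ≤ 1 + x + x^2 * Real.exp x := by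
  rcases le_or_gt 1 x with h | h
  · have h1 : (0:ℝ) ≤ (x^2 - 1) * Real.exp x :=
      mul_nonneg (by nlinarith) (Real.exp_pos x).le
    nlinarith
  · have h0 := Real.add_one_le_exp (-x)
    have h1 : (1 - x) * Real.exp x ≤ Real.exp (-x) * Real.exp x := by
      apply mul_le_mul_of_nonneg_right _ (Real.exp_pos x).le
      linarith
    rw [← Real.exp_add, neg_add_cancel, Real.exp_zero] at h1
    nlinarith [Real.exp_pos x]

lemma aux_sq_le_exp {u : ℝ} (hu : 0 ≤ u) : u^2 ≤ 4 * Real.exp u := by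
  have h := Real.add_one_le_exp (u/2)
  have h2 : Real.exp u = Real.exp (u/2) * Real.exp (u/2) := by
    rw [← Real.exp_add]; ring_nf
  nlinarith [Real.exp_pos (u/2)]

lemma psi2Norm_le {Ω : Type*} [MeasurableSpace Ω] (μ : Measure Ω) (Z : Ω → ℝ) {c : ℝ}
    (hc : 0 < c) (h : ∫ ω, Real.exp (Z ω ^ 2 / c ^ 2) ∂μ ≤ 2) : psi2Norm μ Z ≤ c :=
  csInf_le ⟨0, fun k hk => hk.1.le⟩ ⟨hc, h⟩

lemma exp_sq_le_two_of_psi2 {Ω : Type*} [MeasurableSpace Ω] {μ : Measure Ω}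
    [IsProbabilityMeasure μ] {Y : Ω → ℝ}
    (hInt : ∀ c : ℝ, 0 < c → Integrable (fun ω => Real.exp (Y ω ^ 2 / c ^ 2)) μ)
    {K c : ℝ} (hK : 0 < K) (h : psi2Norm μ Y ≤ K) (hc : K < c) :
    ∫ ω, Real.exp (Y ω ^ 2 / c ^ 2) ∂μ ≤ 2 := by
  have hc0 : 0 < c := hK.trans hc
  -- mono in c
  have mono : ∀ k k' : ℝ, 0 < k → k ≤ k' →
      ∫ ω, Real.exp (Y ω ^ 2 / k' ^ 2) ∂μ ≤ ∫ ω, Real.exp (Y ω ^ 2 / k ^ 2) ∂μ := by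
    intro k k' hk hkk'
    refine integral_mono (hInt k' (hk.trans_le hkk')) (hInt k hk) (fun ω => ?_)
    apply Real.exp_le_exp.2
    apply div_le_div_of_nonneg_left (sq_nonneg _) (by positivity)
    nlinarith
  -- nonempty
  have hne : {k : ℝ | 0 < k ∧ ∫ ω, Real.exp (Y ω ^ 2 / k ^ 2) ∂μ ≤ 2}.Nonempty := by
    have h1 : Tendsto (fun n : ℕ => ((n : ℝ) + 1) ^ 2) atTop atTop := by
      apply tendsto_atTop_mono (fun n : ℕ => ?_) tendsto_natCast_atTop_atTop
      have : (0:ℝ) ≤ (n:ℝ) := Nat.cast_nonneg n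
      nlinarith
    have hTend : Tendsto (fun n : ℕ => ∫ ω, Real.exp (Y ω ^ 2 / ((n:ℝ)+1) ^ 2) ∂μ) atTop
        (𝓝 (∫ _ω, (1:ℝ) ∂μ)) := by
      apply tendsto_integral_of_dominated_convergence (fun ω => Real.exp (Y ω ^ 2))
      · intro n
        exact (hInt ((n:ℝ)+1) (by positivity)).aestronglyMeasurable
      · simpa using hInt 1 one_pos
      · intro n
        filter_upwards with ω
        rw [Real.norm_eq_abs, abs_of_pos (Real.exp_pos _)]
        apply Real.exp_le_exp.2
        have : (1:ℝ) ≤ ((n:ℝ)+1)^2 := by nlinarith [Nat.cast_nonneg (α := ℝ) n]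
        calc Y ω ^2 / ((n:ℝ)+1)^2 ≤ Y ω ^2 / 1 := by
              apply div_le_div_of_nonneg_left (sq_nonneg _) one_pos this
          _ = Y ω ^2 := div_one _
      · filter_upwards with ω
        have : Tendsto (fun n : ℕ => Y ω ^ 2 / ((n:ℝ)+1)^2) atTop (𝓝 0) :=
          Tendsto.div_atTop tendsto_const_nhds h1
        have := (Real.continuous_exp.tendsto 0).comp this
        simpa [Function.comp_def] using this
    rw [integral_const, probReal_univ] at hTend
    simp only [ENNReal.toReal_one, one_smul, smul_eq_mul, mul_one] at hTend
    have : ∀ᶠ n : ℕ in atTop, ∫ ω, Real.exp (Y ω ^ 2 / ((n:ℝ)+1) ^ 2) ∂μ < 2 :=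
      hTend.eventually_lt_const (by norm_num)
    obtain ⟨n, hn⟩ := this.exists
    exact ⟨(n:ℝ)+1, by positivity, hn.le⟩
  by_contra hcon
  push_neg at hcon
  have hlb : ∀ k ∈ {k : ℝ | 0 < k ∧ ∫ ω, Real.exp (Y ω ^ 2 / k ^ 2) ∂μ ≤ 2}, c ≤ k := by
    intro k hk
    by_contra hck
    push_neg at hck
    exact absurd ((mono k c hk.1 hck.le).trans hk.2) (not_le.2 hcon)
  have := le_csInf hne hlb
  rw [← psi2Norm] at this
  linarith [this.trans h]

lemma aux_exp_neg_quad {u : ℝ} (hu : 0 ≤ u) : Real.exp (-u) ≤ 1 - u + u^2 := by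
  have h0 := Real.add_one_le_exp u
  have h1 : Real.exp (-u) * (1 + u) ≤ 1 := by
    calc Real.exp (-u) * (1+u) ≤ Real.exp (-u) * Real.exp u := by
          apply mul_le_mul_of_nonneg_left _ (Real.exp_pos _).le; linarith
      _ = 1 := by rw [← Real.exp_add, neg_add_cancel, Real.exp_zero]
  nlinarith [Real.exp_pos (-u)]

section Row
variable {Ω : Type*} [MeasurableSpace Ω] {μ : Measure Ω} [IsProbabilityMeasure μ]
  {Y : Ω → ℝ} {K : ℝ}

lemma row_moments (hK : 1 ≤ K) (hmeas : Measurable Y)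
    (hInt : ∀ s : ℝ, 0 < s → Integrable (fun ω => Real.exp (s * Y ω ^ 2)) μ)
    (h2 : ∫ ω, Real.exp (Y ω ^ 2 / (2*K) ^ 2) ∂μ ≤ 2) :
    Integrable (fun ω => Y ω ^ 2) μ ∧ Integrable (fun ω => Y ω ^ 4) μ ∧
      ∫ ω, Y ω ^ 4 ∂μ ≤ 128 * K ^ 4 := by
  have hK0 : (0:ℝ) < K := lt_of_lt_of_le one_pos hK
  have hIexp : Integrable (fun ω => Real.exp (Y ω ^ 2 / (2*K)^2)) μ := by
    have := hInt (1/(2*K)^2) (by positivity)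
    simpa [div_eq_inv_mul] using this
  have hpt : ∀ ω, Y ω ^ 4 ≤ 64 * K^4 * Real.exp (Y ω ^2 / (2*K)^2) := by
    intro ω
    have := aux_sq_le_exp (u := Y ω ^2 / (2*K)^2) (by positivity)
    have h4 : (Y ω ^2 / (2*K)^2)^2 = Y ω ^4 / (16 * K^4) := by ring
    rw [h4] at this
    have : Y ω ^ 4 ≤ 16 * K^4 * (4 * Real.exp (Y ω ^2 / (2*K)^2)) := by
      rw [div_le_iff₀ (by positivity)] at this
      linarith [this]
    linarith
  have hI4 : Integrable (fun ω => Y ω ^ 4) μ := by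
    refine Integrable.mono (hIexp.const_mul (64 * K^4)) ((hmeas.pow_const 4).aestronglyMeasurable) ?_
    filter_upwards with ω
    rw [Real.norm_eq_abs, Real.norm_eq_abs, abs_of_nonneg (by positivity : (0:ℝ) ≤ Y ω ^4)]
    calc Y ω ^ 4 ≤ 64 * K^4 * Real.exp (Y ω ^2 / (2*K)^2) := hpt ω
      _ ≤ |64 * K^4 * Real.exp (Y ω ^2 / (2*K)^2)| := le_abs_self _
  have hI2 : Integrable (fun ω => Y ω ^ 2) μ := by
    refine Integrable.mono ((integrable_const (1:ℝ)).add hI4) ((hmeas.pow_const 2).aestronglyMeasurable) ?_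
    filter_upwards with ω
    rw [Real.norm_eq_abs, Real.norm_eq_abs, abs_of_nonneg (by positivity : (0:ℝ) ≤ Y ω ^2)]
    have : Y ω ^2 ≤ 1 + Y ω ^4 := by nlinarith [sq_nonneg (Y ω ^2 - 1), sq_nonneg (Y ω)]
    calc Y ω ^2 ≤ 1 + Y ω ^4 := this
      _ ≤ |1 + Y ω ^4| := le_abs_self _
  refine ⟨hI2, hI4, ?_⟩
  calc ∫ ω, Y ω ^4 ∂μ ≤ ∫ ω, 64 * K^4 * Real.exp (Y ω ^2 / (2*K)^2) ∂μ :=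
        integral_mono hI4 (hIexp.const_mul _) hpt
    _ = 64 * K^4 * ∫ ω, Real.exp (Y ω ^2 / (2*K)^2) ∂μ := integral_const_mul _ _
    _ ≤ 64 * K^4 * 2 := by
        apply mul_le_mul_of_nonneg_left h2 (by positivity)
    _ ≤ 128 * K^4 := by linarith


lemma row_mgf_neg (hK : 1 ≤ K) (hmeas : Measurable Y)
    (hInt : ∀ s : ℝ, 0 < s → Integrable (fun ω => Real.exp (s * Y ω ^ 2)) μ)
    (h2 : ∫ ω, Real.exp (Y ω ^ 2 / (2*K) ^ 2) ∂μ ≤ 2)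
    (hvar : ∫ ω, Y ω ^ 2 ∂μ = 1) {s : ℝ} (hs : 0 ≤ s) :
    ∫ ω, Real.exp (s * (1 - Y ω ^ 2)) ∂μ ≤ Real.exp (2048 * K^4 * s^2) := by
  have hK0 : (0:ℝ) < K := lt_of_lt_of_le one_pos hK
  obtain ⟨hI2, hI4, h4⟩ := row_moments hK hmeas hInt h2
  have hpt : ∀ ω, Real.exp (s * (1 - Y ω ^2)) ≤
      Real.exp s * (1 - s * Y ω ^2 + s^2 * Y ω ^4) := by
    intro ω
    have h0 := aux_exp_neg_quad (u := s * Y ω ^2) (by positivity)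
    have : Real.exp (s * (1 - Y ω ^2)) = Real.exp s * Real.exp (-(s * Y ω ^2)) := by
      rw [← Real.exp_add]; ring_nf
    rw [this]
    have h1 : Real.exp (-(s * Y ω ^2)) ≤ 1 - s * Y ω ^2 + (s * Y ω ^2)^2 := h0
    have h2' : Real.exp s * Real.exp (-(s * Y ω ^2)) ≤
        Real.exp s * (1 - s * Y ω ^2 + (s * Y ω ^2)^2) :=
      mul_le_mul_of_nonneg_left h1 (Real.exp_pos s).le
    calc Real.exp s * Real.exp (-(s * Y ω ^2)) ≤
          Real.exp s * (1 - s * Y ω ^2 + (s * Y ω ^2)^2) := h2'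
      _ = Real.exp s * (1 - s * Y ω ^2 + s^2 * Y ω ^4) := by ring
  have hLint : Integrable (fun ω => Real.exp (s * (1 - Y ω ^2))) μ := by
    apply Integrable.mono (integrable_const (Real.exp s))
      (((measurable_const.sub (hmeas.pow_const 2)).const_mul s).exp.aestronglyMeasurable)
    filter_upwards with ω
    rw [Real.norm_eq_abs, Real.norm_eq_abs, abs_of_pos (Real.exp_pos _),
      abs_of_pos (Real.exp_pos _)]
    apply Real.exp_le_exp.2
    show s * (1 - Y ω ^ 2) ≤ s
    nlinarith [sq_nonneg (Y ω)]
  have hRint : Integrable (fun ω => Real.exp s * (1 - s * Y ω ^2 + s^2 * Y ω ^4)) μ := by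
    apply Integrable.const_mul
    exact ((integrable_const (1:ℝ)).sub (hI2.const_mul s)).add (hI4.const_mul (s^2))
  calc ∫ ω, Real.exp (s * (1 - Y ω ^2)) ∂μ
      ≤ ∫ ω, Real.exp s * (1 - s * Y ω ^2 + s^2 * Y ω ^4) ∂μ :=
        integral_mono hLint hRint hpt
    _ = Real.exp s * (1 - s * 1 + s^2 * ∫ ω, Y ω ^4 ∂μ) := by
        rw [integral_const_mul]
        congr 1
        have hIa : Integrable (fun ω => 1 - s * Y ω ^ 2) μ :=
          (integrable_const 1).sub (hI2.const_mul s)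
        have e1 : ∫ ω, (1 - s * Y ω ^2 + s^2 * Y ω ^4) ∂μ
            = (∫ ω, (1 - s * Y ω ^2) ∂μ) + ∫ ω, s^2 * Y ω ^4 ∂μ :=
          integral_add hIa (hI4.const_mul _)
        have e2 : ∫ ω, (1 - s * Y ω ^2) ∂μ
            = (∫ _ω, (1:ℝ) ∂μ) - ∫ ω, s * Y ω ^2 ∂μ :=
          integral_sub (integrable_const 1) (hI2.const_mul s)
        rw [e1, e2, integral_const_mul, integral_const_mul, hvar, integral_const]
        simp
    _ ≤ Real.exp s * (1 - s + s^2 * (128 * K^4)) := by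
        apply mul_le_mul_of_nonneg_left _ (Real.exp_pos _).le
        have := mul_le_mul_of_nonneg_left h4 (sq_nonneg s)
        linarith
    _ ≤ Real.exp s * Real.exp (-s + 128 * K^4 * s^2) := by
        apply mul_le_mul_of_nonneg_left _ (Real.exp_pos _).le
        have := Real.add_one_le_exp (-s + 128 * K^4 * s^2)
        linarith
    _ = Real.exp (s + (-s + 128 * K^4 * s^2)) := (Real.exp_add _ _).symm
    _ ≤ Real.exp (2048 * K^4 * s^2) := by
        apply Real.exp_le_exp.2
        have hx : (0:ℝ) ≤ K^4 * s^2 := by positivity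
        nlinarith

lemma row_mgf_pos (hK : 1 ≤ K) (hmeas : Measurable Y)
    (hInt : ∀ s : ℝ, 0 < s → Integrable (fun ω => Real.exp (s * Y ω ^ 2)) μ)
    (h2 : ∫ ω, Real.exp (Y ω ^ 2 / (2*K) ^ 2) ∂μ ≤ 2)
    (hvar : ∫ ω, Y ω ^ 2 ∂μ = 1) {s : ℝ} (hs : 0 ≤ s) (hs' : s ≤ 1/(16*K^2)) :
    ∫ ω, Real.exp (s * (Y ω ^ 2 - 1)) ∂μ ≤ Real.exp (2048 * K^4 * s^2) := by
  have hK0 : (0:ℝ) < K := lt_of_lt_of_le one_pos hK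
  obtain ⟨hI2, hI4, h4⟩ := row_moments hK hmeas hInt h2
  -- ∫ exp(Y²/(8K²)) ≤ 2
  have hIexp8 : Integrable (fun ω => Real.exp (Y ω ^2 / (8*K^2))) μ := by
    have := hInt (1/(8*K^2)) (by positivity)
    simpa [div_eq_inv_mul] using this
  have hIexp4 : Integrable (fun ω => Real.exp (Y ω ^ 2 / (2*K)^2)) μ := by
    have := hInt (1/(2*K)^2) (by positivity)
    simpa [div_eq_inv_mul] using this
  have h8 : ∫ ω, Real.exp (Y ω ^2 / (8*K^2)) ∂μ ≤ 2 := by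
    refine le_trans (integral_mono hIexp8 hIexp4 (fun ω => ?_)) h2
    apply Real.exp_le_exp.2
    apply div_le_div_of_nonneg_left (sq_nonneg _) (by positivity)
    nlinarith
  -- pointwise bound
  have hpt : ∀ ω, Real.exp (s * Y ω ^2) ≤
      1 + s * Y ω ^2 + 1024 * K^4 * s^2 * Real.exp (Y ω ^2 / (8*K^2)) := by
    intro ω
    set w := Y ω ^2 / (8*K^2) with hw
    have hw0 : 0 ≤ w := by positivity
    set t := 8 * K^2 * s with ht
    have ht0 : 0 ≤ t := by positivity
    have ht2 : t ≤ 1/2 := by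
      rw [le_div_iff₀ (by positivity : (0:ℝ) < 16*K^2)] at hs'
      rw [ht]
      nlinarith
    have hsw : s * Y ω ^2 = t * w := by
      rw [ht, hw]; field_simp
    have hq := aux_exp_quad (x := t * w) (by positivity)
    have hew : Real.exp (t * w) ≤ Real.exp (w/2) := by
      apply Real.exp_le_exp.2; nlinarith
    have hwsq : w^2 ≤ 16 * Real.exp (w/2) := by
      have := aux_sq_le_exp (u := w/2) (by positivity)
      nlinarith
    have hee : Real.exp (w/2) * Real.exp (w/2) = Real.exp w := by
      rw [← Real.exp_add]; ring_nf
    have key : Real.exp (t*w) ≤ 1 + t*w + 16 * t^2 * Real.exp w := by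
      have h1 : (t*w)^2 * Real.exp (t*w) ≤ t^2 * w^2 * Real.exp (w/2) := by
        have := mul_le_mul_of_nonneg_left hew (by positivity : (0:ℝ) ≤ (t*w)^2)
        calc (t*w)^2 * Real.exp (t*w) ≤ (t*w)^2 * Real.exp (w/2) := this
          _ = t^2 * w^2 * Real.exp (w/2) := by ring
      have h2' : t^2 * w^2 * Real.exp (w/2) ≤ t^2 * (16 * Real.exp (w/2)) * Real.exp (w/2) := by
        have := mul_le_mul_of_nonneg_left hwsq (sq_nonneg t)
        nlinarith [Real.exp_pos (w/2), sq_nonneg t]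
      have h3 : t^2 * (16 * Real.exp (w/2)) * Real.exp (w/2) = 16 * t^2 * Real.exp w := by
        rw [← hee]; ring
      linarith [hq]
    have h16 : 16 * t^2 * Real.exp w = 1024 * K^4 * s^2 * Real.exp w := by
      rw [ht]; ring
    rw [hsw]
    linarith [key, h16]
  -- integrate
  have hRint : Integrable
      (fun ω => 1 + s * Y ω ^2 + 1024 * K^4 * s^2 * Real.exp (Y ω ^2 / (8*K^2))) μ :=
    ((integrable_const (1:ℝ)).add (hI2.const_mul s)).add (hIexp8.const_mul _)
  have hLint : Integrable (fun ω => Real.exp (s * Y ω ^2)) μ := by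
    rcases hs.eq_or_lt with h | h
    · simp [← h]
    · exact hInt s h
  have hmain : ∫ ω, Real.exp (s * Y ω ^2) ∂μ ≤ 1 + s + 2048 * K^4 * s^2 := by
    calc ∫ ω, Real.exp (s * Y ω ^2) ∂μ
        ≤ ∫ ω, (1 + s * Y ω ^2 + 1024 * K^4 * s^2 * Real.exp (Y ω ^2 / (8*K^2))) ∂μ :=
          integral_mono hLint hRint hpt
      _ = 1 + s * 1 + 1024*K^4*s^2 * ∫ ω, Real.exp (Y ω ^2/(8*K^2)) ∂μ := by
          have hIa : Integrable (fun ω => 1 + s * Y ω ^ 2) μ :=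
            (integrable_const 1).add (hI2.const_mul s)
          have e1 : ∫ ω, (1 + s * Y ω ^2 + 1024*K^4*s^2 * Real.exp (Y ω ^2/(8*K^2))) ∂μ
              = (∫ ω, (1 + s * Y ω ^2) ∂μ)
                + ∫ ω, 1024*K^4*s^2 * Real.exp (Y ω ^2/(8*K^2)) ∂μ :=
            integral_add hIa (hIexp8.const_mul _)
          have e2 : ∫ ω, (1 + s * Y ω ^2) ∂μ
              = (∫ _ω, (1:ℝ) ∂μ) + ∫ ω, s * Y ω ^2 ∂μ :=
            integral_add (integrable_const 1) (hI2.const_mul s)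
          rw [e1, e2, integral_const_mul, integral_const_mul, hvar, integral_const]
          simp
      _ ≤ 1 + s + 2048 * K^4 * s^2 := by
          have h1 : 1024*K^4*s^2 * ∫ ω, Real.exp (Y ω ^2/(8*K^2)) ∂μ ≤ 1024*K^4*s^2 * 2 :=
            mul_le_mul_of_nonneg_left h8 (by positivity)
          linarith
  have hsplit : ∀ ω, Real.exp (s * (Y ω ^2 - 1)) = Real.exp (-s) * Real.exp (s * Y ω ^2) := by
    intro ω; rw [← Real.exp_add]; ring_nf
  calc ∫ ω, Real.exp (s * (Y ω ^2 - 1)) ∂μ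
      = Real.exp (-s) * ∫ ω, Real.exp (s * Y ω ^2) ∂μ := by
        simp_rw [hsplit]; exact integral_const_mul _ _
    _ ≤ Real.exp (-s) * (1 + s + 2048*K^4*s^2) := by
        apply mul_le_mul_of_nonneg_left hmain (Real.exp_pos _).le
    _ ≤ Real.exp (-s) * Real.exp (s + 2048*K^4*s^2) := by
        apply mul_le_mul_of_nonneg_left _ (Real.exp_pos _).le
        have := Real.add_one_le_exp (s + 2048*K^4*s^2)
        linarith
    _ = Real.exp (2048 * K^4 * s^2) := by
        rw [← Real.exp_add]; ring_nf

end Row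

lemma chernoff_sum {Ω : Type*} [MeasurableSpace Ω] {μ : Measure Ω} [IsProbabilityMeasure μ]
    {m : ℕ} (hm : 1 ≤ m) {K : ℝ} (hK : 1 ≤ K) {X : Fin m → Ω → ℝ}
    (hmeas : ∀ i, Measurable (X i))
    (hindep : iIndepFun X μ)
    (hint : ∀ i (s : ℝ), 0 ≤ s → Integrable (fun ω => Real.exp (s * X i ω)) μ)
    (hmgf : ∀ i (s : ℝ), 0 ≤ s → s ≤ 1/(16*K^2) →
      ∫ ω, Real.exp (s * X i ω) ∂μ ≤ Real.exp (2048*K^4*s^2))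
    {u : ℝ} (hu : 0 ≤ u) :
    (μ {ω | u ≤ ∑ i, X i ω}).toReal ≤
      Real.exp (-(min (u^2/(8192*(m:ℝ)*K^4)) (u/(32*K^2)))) := by
  have hK0 : (0:ℝ) < K := lt_of_lt_of_le one_pos hK
  have hm0 : (0:ℝ) < (m:ℝ) := by exact_mod_cast hm
  set β : ℝ := 2048*(m:ℝ)*K^4 with hβ
  have hβ0 : 0 < β := by positivity
  set s : ℝ := min (u/(2*β)) (1/(16*K^2)) with hs
  have hs0 : 0 ≤ s := le_min (by positivity) (by positivity)
  have hs1 : s ≤ 1/(16*K^2) := min_le_right _ _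
  have hintS : Integrable (fun ω => Real.exp (s * (∑ i, X i) ω)) μ :=
    hindep.integrable_exp_mul_sum hmeas (fun i _ => hint i s hs0)
  have hch := measure_ge_le_exp_mul_mgf (μ := μ) (X := ∑ i, X i) u hs0 hintS
  have hset : {ω | u ≤ (∑ i, X i) ω} = {ω | u ≤ ∑ i, X i ω} := by
    ext ω; simp [Finset.sum_apply]
  rw [hset] at hch
  have hprod : mgf (∑ i, X i) μ s ≤ Real.exp (β * s^2) := by
    rw [hindep.mgf_sum hmeas]
    calc ∏ i, mgf (X i) μ s ≤ ∏ _i : Fin m, Real.exp (2048*K^4*s^2) := by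
          apply Finset.prod_le_prod (fun i _ => mgf_nonneg)
          intro i _
          exact hmgf i s hs0 hs1
      _ = Real.exp (2048*K^4*s^2) ^ m := by
          rw [Finset.prod_const, Finset.card_univ, Fintype.card_fin]
      _ = Real.exp ((m:ℝ) * (2048*K^4*s^2)) := (Real.exp_nat_mul _ m).symm
      _ = Real.exp (β * s^2) := by rw [hβ]; ring_nf
  have hmain : (μ {ω | u ≤ ∑ i, X i ω}).toReal ≤ Real.exp (-s*u + β*s^2) := by
    calc (μ {ω | u ≤ ∑ i, X i ω}).toReal ≤ Real.exp (-s*u) * mgf (∑ i, X i) μ s := hch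
      _ ≤ Real.exp (-s*u) * Real.exp (β*s^2) :=
          mul_le_mul_of_nonneg_left hprod (Real.exp_pos _).le
      _ = Real.exp (-s*u + β*s^2) := (Real.exp_add _ _).symm
  refine hmain.trans (Real.exp_le_exp.2 ?_)
  -- -s*u + β*s^2 ≤ -(min ...)
  have hβs : β * s ≤ u/2 := by
    have : s ≤ u/(2*β) := min_le_left _ _
    rw [le_div_iff₀ (by positivity)] at this
    linarith
  have h1 : -s*u + β*s^2 ≤ -(s*u/2) := by nlinarith
  refine h1.trans ?_
  rw [neg_le_neg_iff]
  rcases min_cases (u/(2*β)) (1/(16*K^2)) with ⟨he, _⟩ | ⟨he, _⟩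
  · have : s*u/2 = u^2/(4*β) := by rw [hs, he]; ring
    rw [this]
    refine (min_le_left _ _).trans ?_
    rw [hβ]
    apply div_le_div_of_nonneg_left (by positivity) (by positivity)
    nlinarith
  · have : s*u/2 = u/(32*K^2) := by rw [hs, he]; ring
    rw [this]
    exact min_le_right _ _

lemma layercake_exp_le_two {Ω : Type*} [MeasurableSpace Ω] {μ : Measure Ω}
    [IsProbabilityMeasure μ] {Z : Ω → ℝ} {a2 : ℝ} (ha : 0 < a2)
    (hmeas : Measurable Z)
    (hInt : Integrable (fun ω => Real.exp (Z ω ^ 2 / (3 * a2))) μ)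
    (htail : ∀ t : ℝ, 0 ≤ t → (μ {ω | t ≤ |Z ω|}).toReal ≤ 2 * Real.exp (-(t^2/a2))) :
    ∫ ω, Real.exp (Z ω ^ 2 / (3 * a2)) ∂μ ≤ 2 := by
  set f : Ω → ℝ := fun ω => Real.exp (Z ω ^ 2 / (3 * a2)) - 1 with hf
  have hfnn : 0 ≤ᵐ[μ] f := Eventually.of_forall (fun ω => by
    have h3 : (0:ℝ) ≤ Z ω ^ 2 / (3*a2) := div_nonneg (sq_nonneg _) (by linarith)
    simp only [hf, Pi.zero_apply, sub_nonneg]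
    linarith [Real.add_one_le_exp (Z ω ^ 2 / (3*a2))])
  have hfint : Integrable f μ := hInt.sub (integrable_const 1)
  have hkey := hfint.integral_eq_integral_meas_lt hfnn
  -- pointwise bound on the tail measure
  have hbound : ∀ t : ℝ, 0 < t →
      (μ {a | t < f a}).toReal ≤ 2 * (1+t)^(-3 : ℝ) := by
    intro t ht
    have h1t : (0:ℝ) < 1 + t := by linarith
    set r : ℝ := Real.sqrt (3 * a2 * Real.log (1+t)) with hr
    have hlog : 0 ≤ Real.log (1+t) := Real.log_nonneg (by linarith)
    have hsub : {a | t < f a} ⊆ {ω | r ≤ |Z ω|} := by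
      intro ω hω
      simp only [hf, Set.mem_setOf_eq] at hω ⊢
      have h2 : 1 + t < Real.exp (Z ω ^2 / (3*a2)) := by linarith
      have h3 : Real.log (1+t) < Z ω ^2 / (3*a2) := (Real.log_lt_iff_lt_exp h1t).2 h2
      have h4 : 3 * a2 * Real.log (1+t) ≤ Z ω ^2 := by
        rw [lt_div_iff₀ (by positivity)] at h3
        linarith
      calc r ≤ Real.sqrt (Z ω ^2) := Real.sqrt_le_sqrt h4
        _ = |Z ω| := Real.sqrt_sq_eq_abs _
    have := (ENNReal.toReal_mono (measure_ne_top μ _) (measure_mono hsub)).trans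
      (htail r (Real.sqrt_nonneg _))
    refine this.trans ?_
    have hrsq : r^2 = 3 * a2 * Real.log (1+t) := Real.sq_sqrt (by positivity)
    rw [hrsq]
    have heq : -(3 * a2 * Real.log (1+t) / a2) = Real.log (1+t) * (-3 : ℝ) := by
      field_simp
    rw [heq, Real.exp_mul, Real.exp_log h1t]
  -- integral of the dominating function
  have hg : ∀ x ∈ Ioi (0:ℝ), HasDerivAt (fun t : ℝ => -(1+t)^(-2:ℝ))
      (2 * (1+x)^(-3:ℝ)) x := by
    intro x hx
    have h1x : (0:ℝ) < 1 + x := by simp at hx; linarith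
    have h0 : HasDerivAt (fun t : ℝ => 1 + t) 1 x := (hasDerivAt_id x).const_add 1
    have h1 : HasDerivAt (fun t : ℝ => (1+t)^(-2:ℝ)) ((-2:ℝ) * (1+x)^(-3:ℝ) * 1) x := by
      have := (Real.hasDerivAt_rpow_const (x := 1+x) (p := (-2:ℝ)) (Or.inl h1x.ne')).comp x h0
      rw [show (-2:ℝ) - 1 = -3 by norm_num] at this
      exact this
    have := h1.neg
    rw [show (2 * (1+x)^(-3:ℝ)) = -((-2:ℝ) * (1+x)^(-3:ℝ) * 1) by ring]
    exact this
  have hcont : ContinuousWithinAt (fun t : ℝ => -(1+t)^(-2:ℝ)) (Ici 0) 0 := by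
    apply ContinuousAt.continuousWithinAt
    have h1 : ContinuousAt (fun t : ℝ => 1 + t) 0 := by fun_prop
    have h2 : ContinuousAt (fun y : ℝ => y ^ (-2:ℝ)) ((fun t : ℝ => 1 + t) 0) :=
      Real.continuousAt_rpow_const _ _ (Or.inl (by norm_num))
    exact (h2.comp h1).neg
  have hgpos : ∀ x ∈ Ioi (0:ℝ), 0 ≤ 2 * (1+x)^(-3:ℝ) := by
    intro x hx
    simp only [mem_Ioi] at hx
    positivity
  have hlim : Tendsto (fun t : ℝ => -(1+t)^(-2:ℝ)) atTop (𝓝 0) := by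
    have h1 : Tendsto (fun t : ℝ => 1 + t) atTop atTop := tendsto_atTop_add_const_left _ 1 tendsto_id
    have h2 : Tendsto (fun t : ℝ => (1+t)^(-2:ℝ)) atTop (𝓝 0) :=
      (tendsto_rpow_neg_atTop (by norm_num : (0:ℝ) < 2)).comp h1
    simpa using h2.neg
  have hDint : IntegrableOn (fun t : ℝ => 2 * (1+t)^(-3:ℝ)) (Ioi 0) :=
    integrableOn_Ioi_deriv_of_nonneg hcont hg hgpos hlim
  have hDval : ∫ t in Ioi (0:ℝ), 2 * (1+t)^(-3:ℝ) = 1 := by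
    rw [integral_Ioi_of_hasDerivAt_of_nonneg hcont hg hgpos hlim]
    norm_num
  -- conclude
  have hmono : ∫ t in Ioi (0:ℝ), (μ {a | t < f a}).toReal ≤
      ∫ t in Ioi (0:ℝ), 2 * (1+t)^(-3:ℝ) := by
    apply integral_mono_of_nonneg
    · exact Eventually.of_forall (fun t => ENNReal.toReal_nonneg)
    · exact hDint
    · exact (ae_restrict_iff' measurableSet_Ioi).2 (Eventually.of_forall (fun t ht => hbound t ht))
  have hff : ∫ ω, f ω ∂μ ≤ 1 := by
    rw [hkey]; rw [hDval] at hmono; exact hmono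
  have : ∫ ω, f ω ∂μ = (∫ ω, Real.exp (Z ω ^2/(3*a2)) ∂μ) - 1 := by
    rw [hf, integral_sub hInt (integrable_const 1), integral_const]
    simp
  linarith [this ▸ hff]


set_option maxHeartbeats 1000000 in
/-- **Concentration of a random matrix on a single vector:**
`‖ ‖Ax‖₂ − √m ‖_ψ₂ ≤ C K²` for every unit vector `x`. -/
theorem concentration_on_single_vector :
    ∃ C : ℝ, 0 < C ∧
    ∀ (Ω : Type) [MeasurableSpace Ω] (μ : Measure Ω), IsProbabilityMeasure μ →
      ∀ (m n : ℕ) (A : Ω → Fin m → Fin n → ℝ) (K : ℝ),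
        1 ≤ K → IsIsotropicSubGaussian μ A K →
        ∀ x : Fin n → ℝ, l2norm x = 1 →
        psi2Norm μ (fun ω => l2norm (matVec (A ω) x) - Real.sqrt m) ≤ C * K ^ 2 := by
  refine ⟨157, by norm_num, ?_⟩
  intro Ω _ μ hμ m n A K hK hA x hx
  have hK0 : (0:ℝ) < K := lt_of_lt_of_le one_pos hK
  have hc157 : (0:ℝ) < 157 * K^2 := by positivity
  set Z : Ω → ℝ := fun ω => l2norm (matVec (A ω) x) - Real.sqrt m with hZdef
  -- measurability
  have hmeasA : ∀ i j, Measurable (fun ω => A ω i j) := fun i j =>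
    (measurable_pi_apply j).comp ((measurable_pi_apply i).comp hA.measurable)
  have hmeasY : ∀ i, Measurable (fun ω => ∑ j, A ω i j * x j) := fun i =>
    Finset.measurable_sum _ (fun j _ => (hmeasA i j).mul_const _)
  have hmeasN : Measurable (fun ω => l2norm (matVec (A ω) x)) := by
    have : (fun ω => l2norm (matVec (A ω) x))
        = fun ω => Real.sqrt (∑ i, (∑ j, A ω i j * x j)^2) := rfl
    rw [this]
    exact (Finset.measurable_sum _ (fun i _ => (hmeasY i).pow_const 2)).sqrt
  have hmeasZ : Measurable Z := hmeasN.sub measurable_const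
  -- trivial case m = 0
  rcases Nat.eq_zero_or_pos m with rfl | hm
  · refine (psi2Norm_le μ Z hc157 ?_).trans (le_refl _)
    have hZ0 : ∀ ω, Z ω = 0 := by
      intro ω
      simp [hZdef, l2norm, matVec]
    have : (fun ω => Real.exp (Z ω ^2 / (157*K^2)^2)) = fun _ω => (1:ℝ) := by
      funext ω; rw [hZ0 ω]; simp
    rw [this]
    simp
  -- easy non-integrable case
  by_cases hI : ∀ c : ℝ, 0 < c → Integrable (fun ω => Real.exp (Z ω ^2 / c^2)) μ
  swap
  · push_neg at hI
    obtain ⟨c, hc, hnint⟩ := hI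
    set ε : ℝ := min c (157*K^2) with hε
    have hε0 : 0 < ε := lt_min hc hc157
    have hnint' : ¬ Integrable (fun ω => Real.exp (Z ω ^2 / ε^2)) μ := by
      intro h
      apply hnint
      refine h.mono (((hmeasZ.pow_const 2).div_const _).exp.aestronglyMeasurable) ?_
      filter_upwards with ω
      rw [Real.norm_eq_abs, Real.norm_eq_abs, abs_of_pos (Real.exp_pos _),
        abs_of_pos (Real.exp_pos _)]
      apply Real.exp_le_exp.2
      apply div_le_div_of_nonneg_left (sq_nonneg _) (by positivity)
      have : ε ≤ c := min_le_left _ _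
      nlinarith
    have : ∫ ω, Real.exp (Z ω ^2 / ε^2) ∂μ = 0 := integral_undef hnint'
    have h2 : ∫ ω, Real.exp (Z ω ^2 / ε^2) ∂μ ≤ 2 := by rw [this]; norm_num
    exact (psi2Norm_le μ Z hε0 h2).trans (min_le_right _ _)
  -- hard case
  have hmcast : (1:ℝ) ≤ (m:ℝ) := by exact_mod_cast hm
  set Y : Fin m → Ω → ℝ := fun i ω => ∑ j, A ω i j * x j with hY
  have hNdef : ∀ ω, l2norm (matVec (A ω) x) = Real.sqrt (∑ i, (Y i ω)^2) := fun ω => rfl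
  have hsumnn : ∀ ω, (0:ℝ) ≤ ∑ i, (Y i ω)^2 := fun ω =>
    Finset.sum_nonneg (fun i _ => sq_nonneg _)
  have hNnn : ∀ ω, 0 ≤ l2norm (matVec (A ω) x) := fun ω => Real.sqrt_nonneg _
  have hN2 : ∀ ω, (l2norm (matVec (A ω) x))^2 = ∑ i, (Y i ω)^2 := fun ω => by
    rw [hNdef ω]; exact Real.sq_sqrt (hsumnn ω)
  have hxsum : ∑ j, (x j)^2 = 1 := by
    have h := congrArg (fun y : ℝ => y^2) hx
    simp only [l2norm] at h
    rw [Real.sq_sqrt (Finset.sum_nonneg (fun j _ => sq_nonneg _))] at h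
    simpa using h
  have hmm : (Real.sqrt m)^2 = (m:ℝ) := Real.sq_sqrt (Nat.cast_nonneg m)
  -- integrability of exponentials of N²
  have hIntN : ∀ s : ℝ, 0 < s → Integrable (fun ω => Real.exp (s * ∑ i, (Y i ω)^2)) μ := by
    intro s hs
    have hc : (0:ℝ) < 1 / Real.sqrt (2*s) := by positivity
    have hcsq : (1 / Real.sqrt (2*s))^2 = 1/(2*s) := by
      rw [div_pow, one_pow, Real.sq_sqrt (by positivity : (0:ℝ) ≤ 2*s)]
    have hint := (hI _ hc).const_mul (Real.exp (2*s*m))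
    refine hint.mono' ((Finset.measurable_sum _ (fun i _ => (hmeasY i).pow_const 2)).const_mul s).exp.aestronglyMeasurable ?_
    filter_upwards with ω
    rw [Real.norm_eq_abs, abs_of_pos (Real.exp_pos _), ← Real.exp_add]
    apply Real.exp_le_exp.2
    have hZω : Z ω = l2norm (matVec (A ω) x) - Real.sqrt m := rfl
    have h1 : Z ω ^2 / (1 / Real.sqrt (2*s))^2 = 2*s*(Z ω)^2 := by
      rw [hcsq]; field_simp
    rw [h1]
    have hN := hN2 ω
    have hNn := hNnn ω
    have hq : ∑ i, (Y i ω)^2 ≤ 2*(Z ω)^2 + 2*(m:ℝ) := by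
      nlinarith [sq_nonneg (Z ω - Real.sqrt (m:ℝ))]
    nlinarith
  have hIntY : ∀ i (s : ℝ), 0 < s → Integrable (fun ω => Real.exp (s * (Y i ω)^2)) μ := by
    intro i s hs
    refine (hIntN s hs).mono' (((hmeasY i).pow_const 2).const_mul s).exp.aestronglyMeasurable ?_
    filter_upwards with ω
    rw [Real.norm_eq_abs, abs_of_pos (Real.exp_pos _)]
    apply Real.exp_le_exp.2
    apply mul_le_mul_of_nonneg_left _ hs.le
    exact Finset.single_le_sum (f := fun i => (Y i ω)^2) (fun i _ => sq_nonneg _)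
      (Finset.mem_univ i)
  have hIntYc : ∀ i (c : ℝ), 0 < c → Integrable (fun ω => Real.exp ((Y i ω)^2 / c^2)) μ := by
    intro i c hc
    have := hIntY i (1/c^2) (by positivity)
    refine this.congr (Eventually.of_forall (fun ω => ?_))
    have hc' : c ≠ 0 := ne_of_gt hc
    simp only []
    congr 1
    field_simp
  -- variance 1
  have hvar : ∀ i, ∫ ω, (Y i ω)^2 ∂μ = 1 := by
    intro i
    have hdiag : ∀ j, Integrable (fun ω => A ω i j * A ω i j) μ := by
      intro j
      by_contra h
      have h0 := integral_undef h
      have h1 := hA.isotropic i j j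
      rw [if_pos rfl] at h1
      rw [h0] at h1
      norm_num at h1
    have hprod : ∀ j k, Integrable (fun ω => A ω i j * A ω i k) μ := by
      intro j k
      refine ((hdiag j).add (hdiag k)).mono' ((hmeasA i j).mul (hmeasA i k)).aestronglyMeasurable ?_
      filter_upwards with ω
      rw [Real.norm_eq_abs, abs_mul]
      simp only [Pi.add_apply]
      nlinarith [sq_nonneg (|A ω i j| - |A ω i k|), sq_abs (A ω i j), sq_abs (A ω i k),
        abs_nonneg (A ω i j), abs_nonneg (A ω i k), abs_mul_abs_self (A ω i j),
        abs_mul_abs_self (A ω i k)]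
    have hexpand : ∀ ω, (Y i ω)^2 = ∑ j, ∑ k, (x j * x k) * (A ω i j * A ω i k) := by
      intro ω
      rw [sq, Finset.sum_mul_sum]
      refine Finset.sum_congr rfl (fun j _ => Finset.sum_congr rfl (fun k _ => by ring))
    calc ∫ ω, (Y i ω)^2 ∂μ
        = ∫ ω, ∑ j, ∑ k, (x j * x k) * (A ω i j * A ω i k) ∂μ := by
          exact integral_congr_ae (Eventually.of_forall (fun ω => hexpand ω))
      _ = ∑ j, ∫ ω, ∑ k, (x j * x k) * (A ω i j * A ω i k) ∂μ :=
          integral_finset_sum _ (fun j _ =>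
            integrable_finset_sum _ (fun k _ => (hprod j k).const_mul _))
      _ = ∑ j, ∑ k, ∫ ω, (x j * x k) * (A ω i j * A ω i k) ∂μ :=
          Finset.sum_congr rfl (fun j _ =>
            integral_finset_sum _ (fun k _ => (hprod j k).const_mul _))
      _ = ∑ j, ∑ k, (x j * x k) * (if j = k then (1:ℝ) else 0) := by
          refine Finset.sum_congr rfl (fun j _ => Finset.sum_congr rfl (fun k _ => ?_))
          rw [integral_const_mul, hA.isotropic i j k]
      _ = ∑ j, (x j)^2 := by
          refine Finset.sum_congr rfl (fun j _ => ?_)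
          simp [mul_ite, Finset.sum_ite_eq, sq]
      _ = 1 := hxsum
  -- subgaussian moment bound per row
  have h2K : ∀ i, ∫ ω, Real.exp ((Y i ω)^2 / (2*K)^2) ∂μ ≤ 2 := fun i =>
    exp_sq_le_two_of_psi2 (hIntYc i) hK0 (hA.subgaussian i x hx) (by nlinarith)
  -- independence of the centered squares
  have hindepP : iIndepFun (fun i ω => (Y i ω)^2 - 1) μ := by
    have hgmeas : ∀ i : Fin m, Measurable (fun v : Fin n → ℝ => (∑ j, v j * x j)^2 - 1) :=
      fun i => ((Finset.measurable_sum _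
        (fun j _ => (measurable_pi_apply j).mul_const _)).pow_const 2).sub measurable_const
    exact hA.indep.comp (fun i => fun v : Fin n → ℝ => (∑ j, v j * x j)^2 - 1) hgmeas
  have hindepM : iIndepFun (fun i ω => 1 - (Y i ω)^2) μ := by
    have hgmeas : ∀ i : Fin m, Measurable (fun v : Fin n → ℝ => 1 - (∑ j, v j * x j)^2) :=
      fun i => measurable_const.sub ((Finset.measurable_sum _
        (fun j _ => (measurable_pi_apply j).mul_const _)).pow_const 2)
    exact hA.indep.comp (fun i => fun v : Fin n → ℝ => 1 - (∑ j, v j * x j)^2) hgmeas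
  -- integrability of mgf integrands
  have hintP : ∀ (i : Fin m) (s : ℝ), 0 ≤ s →
      Integrable (fun ω => Real.exp (s * ((Y i ω)^2 - 1))) μ := by
    intro i s hs
    rcases eq_or_lt_of_le hs with h | h
    · simp only [← h, zero_mul, Real.exp_zero]
      exact integrable_const 1
    · refine ((hIntY i s h).const_mul (Real.exp (-s))).congr
        (Eventually.of_forall (fun ω => ?_))
      show Real.exp (-s) * Real.exp (s * Y i ω ^ 2) = Real.exp (s * (Y i ω ^ 2 - 1))
      rw [← Real.exp_add]
      congr 1
      ring
  have hintM : ∀ (i : Fin m) (s : ℝ), 0 ≤ s →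
      Integrable (fun ω => Real.exp (s * (1 - (Y i ω)^2))) μ := by
    intro i s hs
    refine (integrable_const (Real.exp s)).mono'
      (((measurable_const.sub ((hmeasY i).pow_const 2)).const_mul s).exp.aestronglyMeasurable) ?_
    filter_upwards with ω
    rw [Real.norm_eq_abs, abs_of_pos (Real.exp_pos _)]
    apply Real.exp_le_exp.2
    nlinarith [sq_nonneg (Y i ω)]
  -- tail bounds
  have htailP : ∀ u : ℝ, 0 ≤ u → (μ {ω | u ≤ ∑ i, ((Y i ω)^2 - 1)}).toReal ≤
      Real.exp (-(min (u^2/(8192*(m:ℝ)*K^4)) (u/(32*K^2)))) := by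
    intro u hu
    exact chernoff_sum hm hK
      (fun i => ((hmeasY i).pow_const 2).sub measurable_const) hindepP hintP
      (fun i s hs hs' => row_mgf_pos hK (hmeasY i) (fun s hs => hIntY i s hs)
        (h2K i) (hvar i) hs hs') hu
  have htailM : ∀ u : ℝ, 0 ≤ u → (μ {ω | u ≤ ∑ i, (1 - (Y i ω)^2)}).toReal ≤
      Real.exp (-(min (u^2/(8192*(m:ℝ)*K^4)) (u/(32*K^2)))) := by
    intro u hu
    exact chernoff_sum hm hK
      (fun i => measurable_const.sub ((hmeasY i).pow_const 2)) hindepM hintM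
      (fun i s hs hs' => row_mgf_neg hK (hmeasY i) (fun s hs => hIntY i s hs)
        (h2K i) (hvar i) hs) hu
  -- two-sided tail for Z
  have htail : ∀ t : ℝ, 0 ≤ t → (μ {ω | t ≤ |Z ω|}).toReal ≤
      2 * Real.exp (-(t^2/(8192*K^4))) := by
    intro t ht
    set u : ℝ := max (t * Real.sqrt m) (t^2) with hu
    have hu0 : (0:ℝ) ≤ u := le_trans (sq_nonneg t) (le_max_right _ _)
    have hsub : {ω | t ≤ |Z ω|} ⊆
        {ω | u ≤ ∑ i, ((Y i ω)^2 - 1)} ∪ {ω | u ≤ ∑ i, (1 - (Y i ω)^2)} := by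
      intro ω hω
      simp only [Set.mem_setOf_eq] at hω
      have hNn := hNnn ω
      have hN := hN2 ω
      have hZω : Z ω = l2norm (matVec (A ω) x) - Real.sqrt m := rfl
      have hD : ∑ i, ((Y i ω)^2 - 1) = (l2norm (matVec (A ω) x))^2 - m := by
        rw [Finset.sum_sub_distrib, Finset.sum_const, Finset.card_univ, Fintype.card_fin, hN]
        simp
      have hDm : ∑ i, (1 - (Y i ω)^2) = (m:ℝ) - (l2norm (matVec (A ω) x))^2 := by
        rw [Finset.sum_sub_distrib, Finset.sum_const, Finset.card_univ, Fintype.card_fin, hN]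
        simp
      have hfac : (l2norm (matVec (A ω) x))^2 - (m:ℝ)
          = (Z ω) * (l2norm (matVec (A ω) x) + Real.sqrt m) := by
        rw [hZω]; linear_combination hmm
      have habs2 : |(l2norm (matVec (A ω) x))^2 - (m:ℝ)|
          = |Z ω| * (l2norm (matVec (A ω) x) + Real.sqrt m) := by
        rw [hfac, abs_mul, abs_of_nonneg (add_nonneg hNn (Real.sqrt_nonneg _))]
      have habs : u ≤ |(l2norm (matVec (A ω) x))^2 - (m:ℝ)| := by
        rw [habs2]
        apply max_le
        · exact mul_le_mul hω (by linarith) (Real.sqrt_nonneg _) (abs_nonneg _)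
        · have h1 : |Z ω| ≤ l2norm (matVec (A ω) x) + Real.sqrt m := by
            rw [hZω, abs_le]
            constructor <;> nlinarith [Real.sqrt_nonneg (m:ℝ)]
          calc t^2 ≤ |Z ω| * |Z ω| := by nlinarith [abs_nonneg (Z ω)]
            _ ≤ |Z ω| * (l2norm (matVec (A ω) x) + Real.sqrt m) :=
              mul_le_mul_of_nonneg_left h1 (abs_nonneg _)
      rcases abs_cases ((l2norm (matVec (A ω) x))^2 - (m:ℝ)) with ⟨he, _⟩ | ⟨he, _⟩
      · left
        rw [Set.mem_setOf_eq, hD]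
        rw [he] at habs
        exact habs
      · right
        rw [Set.mem_setOf_eq, hDm]
        rw [he] at habs
        linarith
    have hm1 := htailP u hu0
    have hm2 := htailM u hu0
    have hchain : (μ {ω | t ≤ |Z ω|}).toReal ≤
        (μ {ω | u ≤ ∑ i, ((Y i ω)^2 - 1)}).toReal
          + (μ {ω | u ≤ ∑ i, (1 - (Y i ω)^2)}).toReal := by
      have hub := (measure_mono hsub).trans
        (measure_union_le (μ := μ) {ω | u ≤ ∑ i, ((Y i ω)^2 - 1)} {ω | u ≤ ∑ i, (1 - (Y i ω)^2)})
      have h1 := ENNReal.toReal_mono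
        (ENNReal.add_ne_top.2 ⟨measure_ne_top μ _, measure_ne_top μ _⟩) hub
      rwa [ENNReal.toReal_add (measure_ne_top μ _) (measure_ne_top μ _)] at h1
    have hexp : Real.exp (-(min (u^2/(8192*(m:ℝ)*K^4)) (u/(32*K^2))))
        ≤ Real.exp (-(t^2/(8192*K^4))) := by
      apply Real.exp_le_exp.2
      rw [neg_le_neg_iff]
      apply le_min
      · have hu1 : t * Real.sqrt m ≤ u := le_max_left _ _
        have hsq : t^2 * (m:ℝ) ≤ u^2 := by
          nlinarith [Real.sqrt_nonneg (m:ℝ), mul_nonneg ht (Real.sqrt_nonneg (m:ℝ))]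
        rw [div_le_div_iff₀ (by positivity) (by positivity)]
        nlinarith [mul_le_mul_of_nonneg_left hsq (show (0:ℝ) ≤ 8192*K^4 by positivity)]
      · have hu2 : t^2 ≤ u := le_max_right _ _
        calc t^2/(8192*K^4) ≤ t^2/(32*K^2) :=
              div_le_div_of_nonneg_left (sq_nonneg t) (by positivity)
                (by nlinarith [mul_nonneg (show (0:ℝ) ≤ K^2 - 1 by nlinarith) (sq_nonneg K),
                  sq_nonneg K])
          _ ≤ u/(32*K^2) := by gcongr
    have hfin2 := add_le_add (hm1.trans hexp) (hm2.trans hexp)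
    refine hchain.trans (hfin2.trans ?_)
    rw [two_mul]
  -- conclude via layer cake
  have ha2 : (0:ℝ) < 8192*K^4 := by positivity
  have hInt3 : Integrable (fun ω => Real.exp (Z ω ^2 / (3*(8192*K^4)))) μ := by
    have hcpos : (0:ℝ) < Real.sqrt (3*(8192*K^4)) := Real.sqrt_pos.2 (by positivity)
    have h24 : (Real.sqrt (3*(8192*K^4)))^2 = 3*(8192*K^4) := Real.sq_sqrt (by positivity)
    have := hI _ hcpos
    simp only [h24] at this
    exact this
  have hfin := layercake_exp_le_two (a2 := 8192*K^4) ha2 hmeasZ hInt3 htail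
  refine psi2Norm_le μ Z hc157 ?_
  refine le_trans (integral_mono (hI _ hc157) hInt3 (fun ω => ?_)) hfin
  apply Real.exp_le_exp.2
  apply div_le_div_of_nonneg_left (sq_nonneg _) (by positivity)
  nlinarith


end
end
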